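/- Suppose the reference density rho on R^d is bounded by M and supported in a compact set Y. Fix distinct points x_i, x_j in R^d and real b. Then for any real numbers alpha <= beta, the R-measure of the slab {y : alpha <= <x_i - x_j, y> - b <= beta} is at most (beta - alpha)/||x_i - x_j|| * M * H^{d-1}(H ∩ Y'), where H = {y : <x_i - x_j, y> = b}, Y' is a suitable bounded neighborhood of Y, and H^{d-1} denotes (d-1)-dimensional Hausdorff measure; in particular the slab measure is O(beta - alpha) as beta - alpha -> 0. -/

import Mathlib

open RealInnerProductSpace MeasureTheory

/-- the R-measure of a slab of width β - α around the hyperplane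
H = {y : ⟪x_i - x_j, y⟫ = b} is at most (β-α)/‖x_i-x_j‖ · M · H^{d-1}(H ∩ Y'),
where Y' is the ((|α| ⊔ |β|)/‖x_i-x_j‖)-neighborhood of the compact support Y of the
bounded density ρ of R. -/
theorem slab_measure_le (d : ℕ) (ρ : EuclideanSpace ℝ (Fin d) → ℝ) (M : ℝ) (hM : 0 < M)
    (hρM : ∀ y, ρ y ≤ M) (hρ0 : ∀ y, 0 ≤ ρ y)
    (Y : Set (EuclideanSpace ℝ (Fin d))) (hY : IsCompact Y)
    (hsupp : ∀ y ∉ Y, ρ y = 0)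
    (R : Measure (EuclideanSpace ℝ (Fin d)))
    (hR : R = volume.withDensity (fun y => ENNReal.ofReal (ρ y)))
    (xi xj : EuclideanSpace ℝ (Fin d)) (hij : xi ≠ xj) (b α β : ℝ) (hαβ : α ≤ β) :
    R {y | α ≤ ⟪xi - xj, y⟫ - b ∧ ⟪xi - xj, y⟫ - b ≤ β}
      ≤ ENNReal.ofReal ((β - α) / ‖xi - xj‖ * M) *
        μH[(d : ℝ) - 1] ({y | ⟪xi - xj, y⟫ = b} ∩
          {y | Metric.infDist y Y ≤ (|α| ⊔ |β|) / ‖xi - xj‖}) := by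
  -- d ≥ 1
  have hd0 : d ≠ 0 := by
    intro h
    subst h
    exact hij (Subsingleton.elim _ _)
  obtain ⟨k, rfl⟩ := Nat.exists_eq_succ_of_ne_zero hd0
  set v : EuclideanSpace ℝ (Fin (k+1)) := xi - xj with hvdef
  have hv : v ≠ 0 := sub_ne_zero.mpr hij
  have hvn : (0:ℝ) < ‖v‖ := norm_pos_iff.mpr hv
  set n : EuclideanSpace ℝ (Fin (k+1)) := ‖v‖⁻¹ • v with hndef
  have hn1 : ‖n‖ = 1 := by
    rw [hndef, norm_smul, norm_inv, norm_norm, inv_mul_cancel₀ hvn.ne']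
  -- orthonormal basis with first vector n
  have horth : Orthonormal ℝ (({0} : Set (Fin (k+1))).restrict (fun _ => n)) :=
    ⟨fun i => hn1, fun {i j} h => absurd (Subsingleton.elim i j) h⟩
  have hcard : Module.finrank ℝ (EuclideanSpace ℝ (Fin (k+1))) = Fintype.card (Fin (k+1)) := by
    simp [finrank_euclideanSpace]
  obtain ⟨B, hB⟩ := horth.exists_orthonormalBasis_extension_of_card_eq hcard
  have hB0 : B 0 = n := hB 0 rfl
  -- the measure preserving equivalence
  let Φ : EuclideanSpace ℝ (Fin (k+1)) ≃ᵐ ℝ × (Fin k → ℝ) :=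
    (B.measurableEquiv.trans ((MeasurableEquiv.toLp 2 (Fin (k+1) → ℝ)).symm)).trans
      (MeasurableEquiv.piFinSuccAbove (fun _ : Fin (k+1) => ℝ) 0)
  have hΦ : MeasurePreserving Φ volume volume :=
    ((volume_preserving_piFinSuccAbove (fun _ : Fin (k+1) => ℝ) 0).comp
      (EuclideanSpace.volume_preserving_symm_measurableEquiv_toLp (Fin (k+1)))).comp
      B.measurePreserving_measurableEquiv
  have hΦ1 : ∀ y : EuclideanSpace ℝ (Fin (k+1)), (Φ y).1 = B.repr y 0 := fun y => rfl
  have hΦ2 : ∀ (y : EuclideanSpace ℝ (Fin (k+1))) (i : Fin k), (Φ y).2 i = B.repr y i.succ := by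
    intro y i
    show B.repr y ((0 : Fin (k+1)).succAbove i) = _
    rw [Fin.zero_succAbove]
  -- inner product via coordinate 0
  have hinner : ∀ y : EuclideanSpace ℝ (Fin (k+1)), ⟪v, y⟫ = ‖v‖ * B.repr y 0 := by
    intro y
    rw [B.repr_apply_apply, hB0, hndef, real_inner_smul_left]
    field_simp
  have hrepr0 : ∀ y : EuclideanSpace ℝ (Fin (k+1)), B.repr y 0 = ⟪v, y⟫ / ‖v‖ := by
    intro y
    rw [hinner y]
    field_simp
  set S : Set (EuclideanSpace ℝ (Fin (k+1))) := {y | α ≤ ⟪v, y⟫ - b ∧ ⟪v, y⟫ - b ≤ β} with hSdef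
  have hScont : Continuous fun y : EuclideanSpace ℝ (Fin (k+1)) => ⟪v, y⟫ := continuous_const.inner continuous_id
  have hSmeas : MeasurableSet S := by
    have : S = (fun y : EuclideanSpace ℝ (Fin (k+1)) => ⟪v, y⟫) ⁻¹' (Set.Icc (α + b) (β + b)) := by
      ext y; simp only [hSdef, Set.mem_setOf_eq, Set.mem_preimage, Set.mem_Icc]
      constructor <;> intro h <;> constructor <;> linarith [h.1, h.2]
    rw [this]
    exact (measurableSet_Icc).preimage hScont.measurable
  -- Step A : R S ≤ M * volume (S ∩ Y)
  have stepA : R S ≤ ENNReal.ofReal M * volume (S ∩ Y) := by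
    rw [hR, withDensity_apply _ hSmeas]
    calc ∫⁻ y in S, ENNReal.ofReal (ρ y) ∂volume
        ≤ ∫⁻ y in S, Y.indicator (fun _ => ENNReal.ofReal M) y ∂volume := by
          apply lintegral_mono
          intro y
          by_cases hy : y ∈ Y
          · simp only [Set.indicator_of_mem hy]
            exact ENNReal.ofReal_le_ofReal (hρM y)
          · simp [Set.indicator_of_notMem hy, hsupp y hy]
      _ = ENNReal.ofReal M * volume (S ∩ Y) := by
          rw [lintegral_indicator hY.measurableSet, setLIntegral_const,
            Measure.restrict_apply hY.measurableSet, Set.inter_comm]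
  set I : Set ℝ := Set.Icc ((b + α) / ‖v‖) ((b + β) / ‖v‖) with hIdef
  set P : Set (Fin k → ℝ) := (fun y : EuclideanSpace ℝ (Fin (k+1)) => (Φ y).2) '' (S ∩ Y) with hPdef
  -- Step B : volume (S ∩ Y) ≤ volume I * volume P
  have hpre : ∀ T : Set (ℝ × (Fin k → ℝ)), volume (Φ ⁻¹' T) = volume T := by
    intro T
    rw [← hΦ.map_eq, MeasurableEquiv.map_apply]
  have hsub : S ∩ Y ⊆ Φ ⁻¹' (I ×ˢ P) := by
    intro y hy
    refine ⟨?_, ⟨y, hy, rfl⟩⟩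
    rw [Set.mem_Icc, hΦ1, hrepr0]
    constructor
    · gcongr
      linarith [hy.1.1]
    · gcongr
      linarith [hy.1.2]
  have stepB : volume (S ∩ Y) ≤ ENNReal.ofReal ((β - α) / ‖v‖) * volume P := by
    calc volume (S ∩ Y) ≤ volume (Φ ⁻¹' (I ×ˢ P)) := measure_mono hsub
      _ = volume (I ×ˢ P) := hpre _
      _ = volume I * volume P := by rw [Measure.volume_eq_prod, Measure.prod_prod]
      _ = ENNReal.ofReal ((β - α) / ‖v‖) * volume P := by
          rw [hIdef, Real.volume_Icc]
          congr 1
          rw [div_sub_div_same]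
          congr 1
          ring
  -- Step C : volume P ≤ μH[k] (H ∩ Y')
  set Y' : Set (EuclideanSpace ℝ (Fin (k+1))) := {y | Metric.infDist y Y ≤ (|α| ⊔ |β|) / ‖v‖} with hY'def
  set g : (Fin k → ℝ) → EuclideanSpace ℝ (Fin (k+1)) := fun w => Φ.symm (b / ‖v‖, w) with hgdef
  set hmap : EuclideanSpace ℝ (Fin (k+1)) → (Fin k → ℝ) := fun y => (Φ y).2 with hhdef
  have hgh : ∀ w, hmap (g w) = w := by
    intro w
    simp only [hhdef, hgdef, Φ.apply_symm_apply]
  have hLip : LipschitzWith 1 hmap := by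
    apply LipschitzWith.of_dist_le_mul
    intro y y'
    rw [NNReal.coe_one, one_mul, dist_pi_le_iff dist_nonneg]
    intro i
    show dist ((Φ y).2 i) ((Φ y').2 i) ≤ dist y y'
    rw [hΦ2, hΦ2, Real.dist_eq, B.repr_apply_apply, B.repr_apply_apply,
      ← inner_sub_right]
    calc |⟪B i.succ, y - y'⟫| ≤ ‖B i.succ‖ * ‖y - y'‖ := abs_real_inner_le_norm _ _
      _ = dist y y' := by rw [B.orthonormal.1 i.succ, one_mul, dist_eq_norm]
  have himg : g '' P ⊆ ({y : EuclideanSpace ℝ (Fin (k+1)) | ⟪v, y⟫ = b} ∩ Y') := by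
    rintro _ ⟨w, ⟨y, hySY, hyw⟩, rfl⟩
    have hΦg : Φ (g w) = (b / ‖v‖, w) := Φ.apply_symm_apply _
    have hg0 : B.repr (g w) 0 = b / ‖v‖ := by
      rw [← hΦ1, hΦg]
    have hgs : ∀ i : Fin k, B.repr (g w) i.succ = B.repr y i.succ := by
      intro i
      rw [← hΦ2, ← hΦ2, hΦg, ← hyw]
    constructor
    · show ⟪v, g w⟫ = b
      rw [hinner, hg0, mul_div_cancel₀ _ hvn.ne']
    · show Metric.infDist (g w) Y ≤ (|α| ⊔ |β|) / ‖v‖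
      refine (Metric.infDist_le_dist_of_mem hySY.2).trans ?_
      have hdiff : B.repr (g w) - B.repr y
          = EuclideanSpace.single (0 : Fin (k+1)) (b / ‖v‖ - B.repr y 0) := by
        ext j
        rcases Fin.eq_zero_or_eq_succ j with rfl | ⟨i, rfl⟩
        · simp [hg0, EuclideanSpace.single_apply]
        · simp [hgs i, EuclideanSpace.single_apply, Fin.succ_ne_zero]
      have hdist : dist (g w) y = |b / ‖v‖ - B.repr y 0| := by
        rw [dist_eq_norm, ← B.repr.norm_map (g w - y), map_sub, hdiff,
          EuclideanSpace.norm_single, Real.norm_eq_abs]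
      rw [hdist, hrepr0]
      have h1 : |b / ‖v‖ - ⟪v, y⟫ / ‖v‖| = |⟪v, y⟫ - b| / ‖v‖ := by
        rw [div_sub_div_same, abs_div, abs_of_pos hvn, abs_sub_comm]
      rw [h1]
      gcongr
      exact abs_le_max_abs_abs hySY.1.1 hySY.1.2
  have hvol_haus : (volume : Measure (Fin k → ℝ)) = μH[(k : ℝ)] := by
    have := hausdorffMeasure_pi_real (ι := Fin k)
    rw [Fintype.card_fin] at this
    exact this.symm
  have stepC : volume P ≤ μH[(k : ℝ)] ({y : EuclideanSpace ℝ (Fin (k+1)) | ⟪v, y⟫ = b} ∩ Y') := by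
    calc volume P = μH[(k : ℝ)] P := by rw [hvol_haus]
      _ = μH[(k : ℝ)] (hmap '' (g '' P)) := by
          rw [Set.image_image]
          simp only [hgh, Set.image_id']
      _ ≤ μH[(k : ℝ)] (g '' P) := by
          simpa using hLip.hausdorffMeasure_image_le (by positivity) (g '' P)
      _ ≤ μH[(k : ℝ)] ({y : EuclideanSpace ℝ (Fin (k+1)) | ⟪v, y⟫ = b} ∩ Y') := measure_mono himg
  -- assemble
  have hexp : ((k + 1 : ℕ) : ℝ) - 1 = (k : ℝ) := by push_cast; ring
  rw [hexp]
  have hnn : (0:ℝ) ≤ (β - α) / ‖v‖ := div_nonneg (by linarith) (norm_nonneg _)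
  calc R S ≤ ENNReal.ofReal M * volume (S ∩ Y) := stepA
    _ ≤ ENNReal.ofReal M * (ENNReal.ofReal ((β - α) / ‖v‖) * volume P) :=
        mul_le_mul_right stepB _
    _ ≤ ENNReal.ofReal M * (ENNReal.ofReal ((β - α) / ‖v‖) *
          μH[(k : ℝ)] ({y : EuclideanSpace ℝ (Fin (k+1)) | ⟪v, y⟫ = b} ∩ Y')) :=
        mul_le_mul_right (mul_le_mul_right stepC _) _
    _ = ENNReal.ofReal ((β - α) / ‖v‖ * M) *
          μH[(k : ℝ)] ({y : EuclideanSpace ℝ (Fin (k+1)) | ⟪v, y⟫ = b} ∩ Y') := by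
        rw [ENNReal.ofReal_mul hnn, ← mul_assoc, mul_comm (ENNReal.ofReal M)]
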